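/- Fix ν > 0 and h ∈ [0, 1), set θ_h := arcsin h, and define G : ℝ → ℝ by G(x) := (2ν/π)·∫₀^∞ t·e^{−t|x|·cos θ_h} / (ν²t²cos²θ_h + 4(t² − 1)²) dt. Then there exists a constant C > 0 such that |G(x) − ν/(2π·cos²θ_h·x²)| ≤ C/x⁴ for all |x| ≥ 1. -/

import Mathlib

open MeasureTheory Real Filter Set
open scoped ENNReal Topology

/-- The fundamental solution of the linearized Néel wall operator
`L = -d²/dx² + (ν/2) cos²θ_h (-d²/dx²)^{1/2} + cos²θ_h`, with `θ_h = arcsin h`. -/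
noncomputable def Gfun (ν h : ℝ) (x : ℝ) : ℝ :=
  2 * ν / Real.pi *
    ∫ t in Set.Ioi (0 : ℝ),
      t * Real.exp (-t * |x| * Real.cos (Real.arcsin h)) /
        (ν ^ 2 * t ^ 2 * Real.cos (Real.arcsin h) ^ 2 + 4 * (t ^ 2 - 1) ^ 2)

lemma int_pow_exp (n : ℕ) {r : ℝ} (hr : 0 < r) :
    MeasureTheory.IntegrableOn (fun t : ℝ => t ^ n * Real.exp (-(r * t))) (Set.Ioi 0) := by
  have hs : (-1 : ℝ) < (n : ℝ) := lt_of_lt_of_le (by norm_num) (Nat.cast_nonneg n)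
  have h := integrableOn_rpow_mul_exp_neg_mul_rpow hs (zero_lt_one : (0:ℝ) < 1) hr
  refine h.congr_fun (fun t ht => ?_) measurableSet_Ioi
  beta_reduce
  rw [Real.rpow_one, Real.rpow_natCast, neg_mul]

lemma intval_pow_exp (n : ℕ) {r : ℝ} (hr : 0 < r) :
    ∫ t in Set.Ioi (0:ℝ), t ^ n * Real.exp (-(r * t)) = (n.factorial : ℝ) / r ^ (n+1) := by
  have h1 : (∫ t in Set.Ioi (0:ℝ), t ^ n * Real.exp (-(r * t)))
      = ∫ t in Set.Ioi (0:ℝ), t ^ (((n:ℝ)+1) - 1) * Real.exp (-(r * t)) := by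
    refine setIntegral_congr_fun measurableSet_Ioi (fun t ht => ?_)
    rw [show ((n:ℝ)+1) - 1 = (n:ℝ) by ring, Real.rpow_natCast]
  rw [h1, Real.integral_rpow_mul_exp_neg_mul_Ioi (by positivity) hr,
    show ((n:ℝ)+1) = ((n+1 : ℕ):ℝ) by push_cast; ring, Real.rpow_natCast,
    show ((n+1:ℕ):ℝ) = (n:ℝ)+1 by push_cast; ring, Real.Gamma_nat_eq_factorial,
    div_pow, one_pow]
  field_simp

set_option maxHeartbeats 1000000 in
/-- quadratic decay of the fundamental solution with quartic error:
`|G(x) - ν/(2π cos²θ_h x²)| ≤ C/x⁴` for `|x| ≥ 1`. -/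
theorem Gfun_decay (ν h : ℝ) (hν : 0 < ν) (hh : h ∈ Set.Ico (0 : ℝ) 1) :
    ∃ C : ℝ, 0 < C ∧ ∀ x : ℝ, 1 ≤ |x| →
      |Gfun ν h x - ν / (2 * Real.pi * Real.cos (Real.arcsin h) ^ 2 * x ^ 2)|
        ≤ C / x ^ 4 := by
  obtain ⟨hh0, hh1⟩ := hh
  set c := Real.cos (Real.arcsin h) with hcdef
  have hc0 : 0 < c := by
    rw [hcdef, Real.cos_arcsin]
    exact Real.sqrt_pos.mpr (by nlinarith)
  set m : ℝ := min (ν^2*c^2/4) (9/4) with hmdef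
  have hm : 0 < m := lt_min (by positivity) (by norm_num)
  -- denominator lower bound
  have Dlb : ∀ t : ℝ, 0 < t → m ≤ ν^2*t^2*c^2 + 4*(t^2-1)^2 := by
    intro t ht
    rcases le_or_gt (1/2) t with h1 | h1
    · calc m ≤ ν^2*c^2/4 := min_le_left _ _
        _ ≤ ν^2*t^2*c^2 + 4*(t^2-1)^2 := by nlinarith [sq_nonneg (t^2-1), sq_nonneg (ν*c), mul_le_mul_of_nonneg_left (by nlinarith : (1:ℝ)/4 ≤ t^2) (by positivity : (0:ℝ) ≤ ν^2*c^2)]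
    · calc m ≤ 9/4 := min_le_right _ _
        _ ≤ ν^2*t^2*c^2 + 4*(t^2-1)^2 := by
          have h2 : 3/4 ≤ 1 - t^2 := by nlinarith
          nlinarith [sq_nonneg (ν*t*c),
            mul_le_mul h2 h2 (by norm_num : (0:ℝ) ≤ 3/4) (by linarith : (0:ℝ) ≤ 1 - t^2)]
  have hDpos : ∀ t : ℝ, 0 < ν^2*t^2*c^2 + 4*(t^2-1)^2 := by
    intro t
    rcases eq_or_ne t 0 with rfl | ht
    · norm_num
    · positivity
  set c1 : ℝ := (ν^2*c^2+8)/(4*m) with hc1def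
  set c2 : ℝ := 1/m with hc2def
  have hc1 : 0 < c1 := by positivity
  have hc2 : 0 < c2 := by positivity
  refine ⟨2*ν/Real.pi * (6*c1/c^4 + 120*c2/c^6), by positivity, ?_⟩
  intro x hx
  have hx0 : x ≠ 0 := by intro hx0; rw [hx0] at hx; simp at hx; linarith
  have hx2 : (1:ℝ) ≤ x^2 := by nlinarith [sq_abs x]
  set a : ℝ := |x| * c with hadef
  have ha0 : 0 < a := by
    have : 0 < |x| := by positivity
    positivity
  -- rewrite Gfun with exponent -(a*t)
  have hG : Gfun ν h x = 2*ν/Real.pi *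
      ∫ t in Set.Ioi (0:ℝ), t * Real.exp (-(a*t)) / (ν^2*t^2*c^2 + 4*(t^2-1)^2) := by
    unfold Gfun
    rw [← hcdef]
    congr 1
    refine setIntegral_congr_fun measurableSet_Ioi (fun t ht => ?_)
    rw [show -t * |x| * c = -(a*t) by rw [hadef]; ring]
  set f : ℝ → ℝ := fun t => t * Real.exp (-(a*t)) / (ν^2*t^2*c^2 + 4*(t^2-1)^2) with hfdef
  set g : ℝ → ℝ := fun t => t * Real.exp (-(a*t)) / 4 with hgdef
  -- integrability
  have hfc : Continuous f := by
    apply Continuous.div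
    · exact continuous_id.mul (by fun_prop)
    · fun_prop
    · exact fun t => (hDpos t).ne'
  have hb1 := int_pow_exp 1 ha0
  have hb3 := int_pow_exp 3 ha0
  have hb5 := int_pow_exp 5 ha0
  have hf_int : IntegrableOn f (Set.Ioi 0) := by
    apply Integrable.mono' (hb1.const_mul (1/m)) hfc.aestronglyMeasurable.restrict
    filter_upwards [ae_restrict_mem measurableSet_Ioi] with t ht
    have ht0 : (0:ℝ) < t := ht
    have hnum : (0:ℝ) ≤ t * Real.exp (-(a*t)) := by positivity
    have hD := Dlb t ht0
    calc ‖f t‖ = t * Real.exp (-(a*t)) / (ν^2*t^2*c^2 + 4*(t^2-1)^2) := by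
          rw [Real.norm_eq_abs, abs_of_nonneg (by positivity)]
      _ ≤ t * Real.exp (-(a*t)) / m := by gcongr
      _ = 1/m * (t^1 * Real.exp (-(a*t))) := by ring
  have hg_int : IntegrableOn g (Set.Ioi 0) := by
    have h0 : IntegrableOn (fun t : ℝ => (1/4 : ℝ) * (t^1 * Real.exp (-(a*t))))
        (Set.Ioi 0) := hb1.const_mul _
    refine h0.congr_fun (fun t ht => ?_) measurableSet_Ioi
    simp only [hgdef, pow_one]; ring
  -- value of ∫ g
  have hgval : ∫ t in Set.Ioi (0:ℝ), g t = 1/(4*a^2) := by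
    have h1 : ∫ t in Set.Ioi (0:ℝ), g t
        = (1/4) * ∫ t in Set.Ioi (0:ℝ), t^1 * Real.exp (-(a*t)) := by
      rw [← MeasureTheory.integral_const_mul]
      refine setIntegral_congr_fun measurableSet_Ioi (fun t ht => ?_)
      simp only [hgdef]; ring
    rw [h1, intval_pow_exp 1 ha0]
    norm_num [Nat.factorial]
    ring
  -- pointwise error bound
  have hpt : ∀ t ∈ Set.Ioi (0:ℝ), |f t - g t|
      ≤ c1 * (t^3 * Real.exp (-(a*t))) + c2 * (t^5 * Real.exp (-(a*t))) := by
    intro t ht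
    have ht0 : (0:ℝ) < t := ht
    set e : ℝ := Real.exp (-(a*t)) with hedef
    have he : 0 < e := Real.exp_pos _
    set D : ℝ := ν^2*t^2*c^2 + 4*(t^2-1)^2 with hDdef
    have hDp : 0 < D := hDpos t
    have hDm : m ≤ D := Dlb t ht0
    have h1 : f t - g t = t*e*(4 - D)/(4*D) := by
      simp only [hfdef, hgdef, ← hDdef, ← hedef]
      field_simp
    have habs : |f t - g t| = t*e*|4-D|/(4*D) := by
      rw [h1, abs_div, abs_of_pos (by positivity : (0:ℝ) < 4*D), abs_mul,
        abs_of_pos (by positivity : (0:ℝ) < t*e)]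
    have habs2 : |4 - D| ≤ t^2*(ν^2*c^2 + 8 + 4*t^2) := by
      rw [show (4:ℝ) - D = t^2*(8 - ν^2*c^2 - 4*t^2) by rw [hDdef]; ring, abs_le]
      constructor <;> nlinarith [mul_nonneg (sq_nonneg t) (sq_nonneg (ν*c)),
        mul_nonneg (sq_nonneg t) (sq_nonneg t)]
    calc |f t - g t| = t*e*|4-D|/(4*D) := habs
      _ ≤ t*e*(t^2*(ν^2*c^2 + 8 + 4*t^2))/(4*m) := by
          gcongr
          try exact mul_le_mul_of_nonneg_left habs2 (by positivity)
      _ = c1 * (t^3 * e) + c2 * (t^5 * e) := by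
          rw [hc1def, hc2def]
          field_simp
          try ring
  -- bound on the difference of integrals
  have hbound_int : IntegrableOn (fun t => c1 * (t^3 * Real.exp (-(a*t)))
      + c2 * (t^5 * Real.exp (-(a*t)))) (Set.Ioi 0) :=
    (hb3.const_mul c1).add (hb5.const_mul c2)
  have herr : |(∫ t in Set.Ioi (0:ℝ), f t) - ∫ t in Set.Ioi (0:ℝ), g t|
      ≤ c1 * (6/a^4) + c2 * (120/a^6) := by
    rw [← integral_sub hf_int hg_int]
    calc |∫ t in Set.Ioi (0:ℝ), (f t - g t)|
        ≤ ∫ t in Set.Ioi (0:ℝ), |f t - g t| := by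
          simpa [Real.norm_eq_abs] using
            norm_integral_le_integral_norm (μ := volume.restrict (Set.Ioi 0))
              (fun t => f t - g t)
      _ ≤ ∫ t in Set.Ioi (0:ℝ), (c1 * (t^3 * Real.exp (-(a*t)))
            + c2 * (t^5 * Real.exp (-(a*t)))) := by
          refine integral_mono_ae (hf_int.sub hg_int).abs hbound_int ?_
          filter_upwards [ae_restrict_mem measurableSet_Ioi] with t ht
          exact hpt t ht
      _ = c1 * (6/a^4) + c2 * (120/a^6) := by
          rw [integral_add (hb3.const_mul c1) (hb5.const_mul c2),
            MeasureTheory.integral_const_mul, MeasureTheory.integral_const_mul, intval_pow_exp 3 ha0,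
            intval_pow_exp 5 ha0]
          norm_num [Nat.factorial]
  -- powers of a
  have habs_pow : ∀ n : ℕ, |x|^n = |x^n| := fun n => (abs_pow x n).symm
  have ha2 : a^2 = c^2 * x^2 := by
    rw [hadef, mul_pow, habs_pow 2, abs_of_nonneg (by positivity)]; ring
  have ha4 : a^4 = c^4 * x^4 := by
    rw [hadef, mul_pow, habs_pow 4, abs_of_nonneg (by positivity)]; ring
  have ha6 : a^6 = c^6 * x^6 := by
    rw [hadef, mul_pow, habs_pow 6, abs_of_nonneg (by positivity)]; ring
  have hpi : 0 < Real.pi := Real.pi_pos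
  -- main chain
  have hmain : Gfun ν h x - ν / (2 * Real.pi * c ^ 2 * x ^ 2)
      = 2*ν/Real.pi * ((∫ t in Set.Ioi (0:ℝ), f t) - ∫ t in Set.Ioi (0:ℝ), g t) := by
    rw [hG, hgval, ha2]
    field_simp
    ring
  rw [hmain, abs_mul, abs_of_pos (by positivity : (0:ℝ) < 2*ν/Real.pi)]
  have h46 : x^4 ≤ x^6 := by
    have hx4 : (0:ℝ) < x^4 := by positivity
    nlinarith [mul_nonneg (le_of_lt hx4) (by linarith : (0:ℝ) ≤ x^2 - 1)]
  have hx4 : (0:ℝ) < x^4 := by positivity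
  have hsum : c1*(6/a^4) + c2*(120/a^6) ≤ (6*c1/c^4 + 120*c2/c^6)/x^4 := by
    rw [ha4, ha6, add_div]
    have e1 : c1*(6/(c^4*x^4)) = (6*c1/c^4)/x^4 := by field_simp
    have e2 : c2*(120/(c^6*x^6)) = (120*c2/c^6)/x^6 := by field_simp
    rw [e1, e2]
    gcongr
    try positivity
  calc 2*ν/Real.pi * |(∫ t in Set.Ioi (0:ℝ), f t) - ∫ t in Set.Ioi (0:ℝ), g t|
      ≤ 2*ν/Real.pi * (c1 * (6/a^4) + c2 * (120/a^6)) := by gcongr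
    _ ≤ 2*ν/Real.pi * ((6*c1/c^4 + 120*c2/c^6)/x^4) :=
        mul_le_mul_of_nonneg_left hsum (by positivity)
    _ = 2*ν/Real.pi * (6*c1/c^4 + 120*c2/c^6) / x^4 := (mul_div_assoc _ _ _).symm
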